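/- Let N ≥ 1. Consider the lattice I_{1,N} = ℤ^{N+1} with standard basis e₀, e₁, …, e_N and symmetric bilinear form B(x,y) = x₀y₀ − Σ_{i=1}^N x_i y_i, and let k_N = −3e₀ + e₁ + ⋯ + e_N. If g is a ℤ-module automorphism of ℤ^{N+1} preserving B (an isometry) such that g(e₀) = e₀ and g(k_N) = k_N, then there exists a permutation σ of {1,…,N} with g(e_i) = e_{σ(i)} for all i = 1, …, N. -/
import Mathlib

lemma stmt15_aux {N : ℕ} (f : Fin N → ℤ) (hsq : ∑ i, f i * f i = 1)
    (hsum : ∑ i, f i = 1) : ∃ j, ∀ i, f i = if i = j then 1 else 0 := by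
  have hne : ∃ j, f j ≠ 0 := by
    by_contra h
    push_neg at h
    simp [h] at hsq
  obtain ⟨j, hj⟩ := hne
  have hle : f j * f j ≤ ∑ i, f i * f i :=
    Finset.single_le_sum (fun i _ => mul_self_nonneg (f i)) (Finset.mem_univ j)
  have hge : 1 ≤ f j * f j := by
    rcases lt_or_eq_of_le (mul_self_nonneg (f j)) with h | h
    · omega
    · exact absurd (mul_self_eq_zero.mp h.symm) hj
  have hjsq : f j * f j = 1 := le_antisymm (hsq ▸ hle) hge
  have hzero : ∀ i, i ≠ j → f i = 0 := by
    intro i hi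
    have hsplit : ∑ k ∈ Finset.univ.erase j, f k * f k = 0 := by
      have h2 : f j * f j + ∑ k ∈ Finset.univ.erase j, f k * f k = ∑ i, f i * f i := by
        have := Finset.add_sum_erase Finset.univ (fun k => f k * f k) (Finset.mem_univ j)
        simpa using this
      rw [hsq, hjsq] at h2; linarith
    have := Finset.sum_eq_zero_iff_of_nonneg
      (fun k _ => mul_self_nonneg (f k)) |>.mp hsplit i (by simp [hi])
    exact mul_self_eq_zero.mp this
  have hfj : f j = 1 := by
    have := Finset.sum_eq_single j (fun i _ hi => hzero i hi)
      (fun h => absurd (Finset.mem_univ j) h)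
    rw [hsum] at this; omega
  refine ⟨j, fun i => ?_⟩
  rcases eq_or_ne i j with h | h
  · simp [h, hfj]
  · simp [h, hzero i h]

/-- an isometry `g` of the lattice `I_{1,N}` (with form
`x₀y₀ - ∑_{i=1}^N x_i y_i`) fixing `e₀` and `k_N = -3e₀ + e₁ + ⋯ + e_N` permutes the
basis vectors `e₁, …, e_N`. -/
theorem stmt15 (N : ℕ) (hN : 1 ≤ N)
    (g : (Fin (N + 1) → ℤ) ≃ₗ[ℤ] (Fin (N + 1) → ℤ))
    (hisom : ∀ x y : Fin (N + 1) → ℤ,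
      g x 0 * g y 0 - ∑ i : Fin N, g x i.succ * g y i.succ
        = x 0 * y 0 - ∑ i : Fin N, x i.succ * y i.succ)
    (he0 : g (Pi.single 0 1) = Pi.single 0 1)
    (hk : g (fun j => if j = 0 then -3 else 1) = fun j => if j = 0 then -3 else 1) :
    ∃ σ : Equiv.Perm (Fin N),
      ∀ i : Fin N, g (Pi.single i.succ 1) = Pi.single (σ i).succ 1 := by
  -- v i 0 = 0
  have h0 : ∀ i : Fin N, g (Pi.single i.succ 1) 0 = 0 := by
    intro i
    have h := hisom (Pi.single i.succ 1) (Pi.single 0 1)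
    rw [he0] at h
    simpa [Pi.single_apply, Fin.succ_ne_zero] using h
  -- sum of squares = 1
  have hsq : ∀ i : Fin N, ∑ j : Fin N,
      g (Pi.single i.succ 1) j.succ * g (Pi.single i.succ 1) j.succ = 1 := by
    intro i
    have h := hisom (Pi.single i.succ 1) (Pi.single i.succ 1)
    rw [h0 i] at h
    simp [Pi.single_apply, Fin.succ_ne_zero, Fin.succ_inj] at h
    linarith
  -- sum of entries = 1
  have hsum : ∀ i : Fin N, ∑ j : Fin N, g (Pi.single i.succ 1) j.succ = 1 := by
    intro i
    have h := hisom (Pi.single i.succ 1) (fun j => if j = 0 then -3 else 1)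
    rw [hk, h0 i] at h
    simp [Pi.single_apply, Fin.succ_ne_zero, Fin.succ_inj] at h
    linarith
  -- each image is a basis vector
  have hbasis : ∀ i : Fin N, ∃ j : Fin N,
      g (Pi.single i.succ 1) = Pi.single j.succ 1 := by
    intro i
    obtain ⟨j, hj⟩ := stmt15_aux (fun k => g (Pi.single i.succ 1) k.succ) (hsq i) (hsum i)
    refine ⟨j, funext fun k => ?_⟩
    refine Fin.cases ?_ (fun k => ?_) k
    · rw [h0 i]
      simp [Pi.single_apply, (Fin.succ_ne_zero j).symm]
    · rw [hj k]
      simp [Pi.single_apply, Fin.succ_inj]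
  choose σ₀ hσ₀ using hbasis
  have hinj : Function.Injective σ₀ := by
    intro a b hab
    have h1 : g (Pi.single a.succ 1) = g (Pi.single b.succ 1) := by
      rw [hσ₀ a, hσ₀ b, hab]
    have h2 : (Pi.single a.succ 1 : Fin (N+1) → ℤ) = Pi.single b.succ 1 :=
      g.injective h1
    have h3 := congrFun h2 a.succ
    simp only [Pi.single_apply, if_pos rfl] at h3
    by_contra hne
    rw [if_neg (fun h => hne (Fin.succ_injective _ h))] at h3
    exact one_ne_zero h3
  exact ⟨Equiv.ofBijective σ₀ (Finite.injective_iff_bijective.mp hinj), fun i => hσ₀ i⟩
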